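/- Suppose p is PRDS on h in the conditioning sense that for every measurable nondecreasing D ⊆ [0,1]^H the function u ↦ P(p ∈ D | p_h = u) is nondecreasing. Then for all 0 < u ≤ u' with P(p_h ≤ u) > 0 and any measurable nondecreasing D, P(p ∈ D | p_h ≤ u') ≥ P(p ∈ D | p_h ≤ u). Consequently, for any procedure R with |R| nonincreasing in the p-values, for every r ≥ 0 the function u ↦ P(|R(p)| < r | p_h ≤ u) is nondecreasing. -/

import Mathlib

open MeasureTheory ProbabilityTheory ENNReal Set Finset

private lemma ennreal_div_le_div_aux {a b m n : ℝ≥0∞} (hm0 : m ≠ 0) (hmt : m ≠ ∞)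
    (hn0 : n ≠ 0) (hnt : n ≠ ∞) (hk : a * n ≤ b * m) : a / m ≤ b / n := by
  rw [ENNReal.div_le_iff hm0 hmt, mul_comm, ← mul_div_assoc,
    ENNReal.le_div_iff_mul_le (Or.inl hn0) (Or.inl hnt)]
  calc a * n ≤ b * m := hk
    _ = m * b := mul_comm _ _

/-- Core monotonicity lemma: if `f` is monotone then the average of `f` over
`Iic u` w.r.t. `μ` is monotone in `u`. -/
private lemma avg_mono {μ : Measure ℝ} [IsFiniteMeasure μ] {f : ℝ → ℝ≥0∞}
    (hf : Monotone f) (hfle : ∀ x, f x ≤ 1) {u u' : ℝ} (huu' : u ≤ u')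
    (hm : 0 < μ (Set.Iic u)) :
    (∫⁻ t in Set.Iic u, f t ∂μ) / μ (Set.Iic u)
      ≤ (∫⁻ t in Set.Iic u', f t ∂μ) / μ (Set.Iic u') := by
  set m : ℝ≥0∞ := μ (Set.Iic u) with hm_def
  set n : ℝ≥0∞ := μ (Set.Ioc u u') with hn_def
  set A : ℝ≥0∞ := ∫⁻ t in Set.Iic u, f t ∂μ with hA_def
  set B : ℝ≥0∞ := ∫⁻ t in Set.Ioc u u', f t ∂μ with hB_def
  have hsplit : μ (Set.Iic u') = m + n := by
    rw [hm_def, hn_def, ← measure_union (Set.Iic_disjoint_Ioc le_rfl) measurableSet_Ioc,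
      Set.Iic_union_Ioc_eq_Iic huu']
  have hIsplit : (∫⁻ t in Set.Iic u', f t ∂μ) = A + B := by
    rw [hA_def, hB_def, ← lintegral_union measurableSet_Ioc (Set.Iic_disjoint_Ioc le_rfl),
      Set.Iic_union_Ioc_eq_Iic huu']
  have hm0 : m ≠ 0 := hm.ne'
  have hmt : m ≠ ∞ := (measure_lt_top μ _).ne
  have hnt : n ≠ ∞ := (measure_lt_top μ _).ne
  have hAc : A ≤ f u * m := by
    rw [hA_def, hm_def, ← setLIntegral_const]
    exact setLIntegral_mono measurable_const fun x hx => hf hx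
  have hcB : f u * n ≤ B := by
    rw [hB_def, hn_def, ← setLIntegral_const]
    exact setLIntegral_mono' measurableSet_Ioc fun x hx => hf hx.1.le
  rw [hsplit, hIsplit]
  have hmn0 : m + n ≠ 0 := by simp [hm0]
  have hmnt : m + n ≠ ∞ := by
    simp [ENNReal.add_ne_top, hmt, hnt]
  refine ennreal_div_le_div_aux hm0 hmt hmn0 hmnt ?_
  have h1 : A * n ≤ B * m := by
    calc A * n ≤ f u * m * n := mul_le_mul_left hAc n
      _ = (f u * n) * m := by ring
      _ ≤ B * m := mul_le_mul_left hcB m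
  calc A * (m + n) = A * m + A * n := by ring
    _ ≤ A * m + B * m := add_le_add_right h1 _
    _ = (A + B) * m := by ring

/-- If `p` is PRDS on `h` in the sense that, for every measurable nondecreasing
set `D`, `u ↦ P(p ∈ D | p_h = u)` (given by the regular conditional
distribution) is nondecreasing, then `u ↦ P(p ∈ D | p_h ≤ u)` is nondecreasing
as well; consequently, for a procedure `R` with `|R|` coordinatewise
nonincreasing, `u ↦ P(|R(p)| < r | p_h ≤ u)` is nondecreasing for every `r`. -/
theorem PRDS_pointwise_implies_conditioning_form
    {Ω : Type*} [MeasurableSpace Ω] (P : Measure Ω) [IsProbabilityMeasure P]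
    {ι : Type*} [Fintype ι] [DecidableEq ι] [Nonempty ι]
    (Λ : ι → ℝ) (hΛ : ∀ g, 0 < Λ g)
    (p : ι → Ω → ℝ) (hp : ∀ g, Measurable (p g))
    (hprange : ∀ g ω, p g ω ∈ Set.Icc (0:ℝ) 1)
    (h : ι)
    -- PRDS on h in the pointwise-conditioning sense, via the regular
    -- conditional distribution of the p-value vector given p_h
    (hPRDS : ∀ D : Set (ι → ℝ), MeasurableSet D →
      (∀ z z' : ι → ℝ, z ∈ D → (∀ i, z i ≤ z' i) → z' ∈ D) →
      Monotone (fun u : ℝ =>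
        (condDistrib (fun ω i => p i ω) (p h) P) u D))
    (R : (ι → ℝ) → Finset ι)
    (hRmeas : ∀ g, MeasurableSet {x : ι → ℝ | g ∈ R x})
    (hRmono : ∀ x y : ι → ℝ, (∀ i, x i ≤ y i) →
      (∑ g ∈ R y, Λ g) ≤ ∑ g ∈ R x, Λ g) :
    -- the conditioning-on-{p_h ≤ u} form of PRDS holds
    (∀ D : Set (ι → ℝ), MeasurableSet D →
      (∀ z z' : ι → ℝ, z ∈ D → (∀ i, z i ≤ z' i) → z' ∈ D) →
      ∀ u u' : ℝ, 0 < u → u ≤ u' → 0 < P {ω | p h ω ≤ u} →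
        P {ω | (fun i => p i ω) ∈ D ∧ p h ω ≤ u} / P {ω | p h ω ≤ u}
          ≤ P {ω | (fun i => p i ω) ∈ D ∧ p h ω ≤ u'} / P {ω | p h ω ≤ u'}) ∧
    -- consequently, u ↦ P(|R(p)| < r | p_h ≤ u) is nondecreasing
    (∀ r : ℝ, ∀ u u' : ℝ, 0 < u → u ≤ u' → 0 < P {ω | p h ω ≤ u} →
      P {ω | (∑ g ∈ R (fun i => p i ω), Λ g) < r ∧ p h ω ≤ u}
          / P {ω | p h ω ≤ u}
        ≤ P {ω | (∑ g ∈ R (fun i => p i ω), Λ g) < r ∧ p h ω ≤ u'}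
          / P {ω | p h ω ≤ u'}) := by
  have hY : Measurable (fun ω i => p i ω) := measurable_pi_lambda _ fun i => hp i
  have hX : Measurable (p h) := hp h
  set κ := condDistrib (fun ω i => p i ω) (p h) P with hκ
  have key : ∀ D : Set (ι → ℝ), MeasurableSet D →
      (∀ z z' : ι → ℝ, z ∈ D → (∀ i, z i ≤ z' i) → z' ∈ D) →
      ∀ u u' : ℝ, 0 < u → u ≤ u' → 0 < P {ω | p h ω ≤ u} →
        P {ω | (fun i => p i ω) ∈ D ∧ p h ω ≤ u} / P {ω | p h ω ≤ u}
          ≤ P {ω | (fun i => p i ω) ∈ D ∧ p h ω ≤ u'} / P {ω | p h ω ≤ u'} := by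
    intro D hD hDmono u u' hu huu' hm
    -- rewrite the events as preimages
    have hset : ∀ v : ℝ, {ω | (fun i => p i ω) ∈ D ∧ p h ω ≤ v}
        = (p h) ⁻¹' Set.Iic v ∩ (fun ω i => p i ω) ⁻¹' D := by
      intro v; ext ω
      simp only [Set.mem_setOf_eq, Set.mem_inter_iff, Set.mem_preimage, Set.mem_Iic]
      exact and_comm
    have hsetX : ∀ v : ℝ, {ω | p h ω ≤ v} = (p h) ⁻¹' Set.Iic v := by
      intro v; rfl
    have hint : ∀ v : ℝ, P ((p h) ⁻¹' Set.Iic v ∩ (fun ω i => p i ω) ⁻¹' D)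
        = ∫⁻ t in Set.Iic v, κ t D ∂(P.map (p h)) := by
      intro v
      rw [← setLIntegral_preimage_condDistrib hX hY.aemeasurable hD measurableSet_Iic,
        setLIntegral_map measurableSet_Iic (Kernel.measurable_coe κ hD) hX]
    have hmap : ∀ v : ℝ, P {ω | p h ω ≤ v} = (P.map (p h)) (Set.Iic v) := by
      intro v
      rw [Measure.map_apply hX measurableSet_Iic, hsetX]
    rw [hset, hset, hint, hint, hmap, hmap]
    have : IsFiniteMeasure (P.map (p h)) := by
      exact Measure.isFiniteMeasure_map P (p h)
    refine avg_mono (hPRDS D hD hDmono) (fun x => prob_le_one) huu' ?_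
    rw [← hmap]; exact hm
  refine ⟨key, ?_⟩
  intro r u u' hu huu' hm
  set D : Set (ι → ℝ) := {x | (∑ g ∈ R x, Λ g) < r} with hD_def
  have hDmeas : MeasurableSet D := by
    have hmeas : Measurable (fun x : ι → ℝ => ∑ g, Set.indicator {x | g ∈ R x} (fun _ => Λ g) x) := by
      exact Finset.measurable_sum _ fun g _ =>
        Measurable.indicator measurable_const (hRmeas g)
    have heq : (fun x : ι → ℝ => ∑ g ∈ R x, Λ g)
        = fun x => ∑ g, Set.indicator {x | g ∈ R x} (fun _ => Λ g) x := by
      funext x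
      rw [Finset.sum_indicator_eq_sum_filter]
      congr 1
      ext g
      simp [Set.indicator_apply, Set.mem_setOf_eq]
    have : D = (fun x : ι → ℝ => ∑ g ∈ R x, Λ g) ⁻¹' Set.Iio r := rfl
    rw [this, heq]
    exact hmeas measurableSet_Iio
  have hDmono : ∀ z z' : ι → ℝ, z ∈ D → (∀ i, z i ≤ z' i) → z' ∈ D := by
    intro z z' hz hle
    exact lt_of_le_of_lt (hRmono z z' hle) hz
  exact key D hDmeas hDmono u u' hu huu' hm
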